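/- Let X be a reflexive Banach space and Y a Banach space such that the pair (X,Y) satisfies both property (m) and property (o). Then (X,Y) has the weak minimizing property: every bounded linear operator T : X → Y admitting a minimizing sequence (x_n) ⊂ S_X (i.e., ‖T x_n‖ → m(T)) that is not weakly null attains its minimum modulus. -/

import Mathlib

open Filter Topology

noncomputable def minMod {X Y : Type*} [NormedAddCommGroup X] [NormedSpace ℝ X]
    [NormedAddCommGroup Y] [NormedSpace ℝ Y] (T : X →L[ℝ] Y) : ℝ :=
  sInf {r : ℝ | ∃ x : X, ‖x‖ = 1 ∧ ‖T x‖ = r}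

def WeaklyNull {X : Type*} [NormedAddCommGroup X] [NormedSpace ℝ X] (x : ℕ → X) : Prop :=
  ∀ f : X →L[ℝ] ℝ, Tendsto (fun n => f (x n)) atTop (𝓝 0)

def AttainsMinMod {X Y : Type*} [NormedAddCommGroup X] [NormedSpace ℝ X]
    [NormedAddCommGroup Y] [NormedSpace ℝ Y] (T : X →L[ℝ] Y) : Prop :=
  ∃ x : X, ‖x‖ = 1 ∧ ‖T x‖ = minMod T

def PairPropM (X Y : Type*) [NormedAddCommGroup X] [NormedSpace ℝ X]
    [NormedAddCommGroup Y] [NormedSpace ℝ Y] : Prop :=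
  ∀ T : X →L[ℝ] Y, 1 ≤ minMod T →
    ∀ (x : X) (y : Y), ‖x‖ ≤ ‖y‖ → ∀ xs : ℕ → X, WeaklyNull xs →
      limsup (fun n => ‖x + xs n‖) atTop ≤ limsup (fun n => ‖y + T (xs n)‖) atTop

def PairPropO (X Y : Type*) [NormedAddCommGroup X] [NormedSpace ℝ X]
    [NormedAddCommGroup Y] [NormedSpace ℝ Y] : Prop :=
  ∀ T : X →L[ℝ] Y, 1 ≤ minMod T →
    ∀ y : Y, y ≠ 0 → ∀ xs : ℕ → X, WeaklyNull xs →
      limsup (fun n => ‖xs n‖) atTop < limsup (fun n => ‖y + T (xs n)‖) atTop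

def PropertyM (X : Type*) [NormedAddCommGroup X] [NormedSpace ℝ X] : Prop :=
  ∀ x y : X, ‖y‖ ≤ ‖x‖ → ∀ xs : ℕ → X, WeaklyNull xs →
    limsup (fun n => ‖y + xs n‖) atTop ≤ limsup (fun n => ‖x + xs n‖) atTop

def OpialProperty (X : Type*) [NormedAddCommGroup X] [NormedSpace ℝ X] : Prop :=
  ∀ x : X, x ≠ 0 → ∀ xs : ℕ → X, WeaklyNull xs →
    limsup (fun n => ‖xs n‖) atTop < limsup (fun n => ‖x + xs n‖) atTop

def WeakMinimizingProperty (X Y : Type*) [NormedAddCommGroup X] [NormedSpace ℝ X]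
    [NormedAddCommGroup Y] [NormedSpace ℝ Y] : Prop :=
  ∀ T : X →L[ℝ] Y,
    (∃ xs : ℕ → X, (∀ n, ‖xs n‖ = 1) ∧
      Tendsto (fun n => ‖T (xs n)‖) atTop (𝓝 (minMod T)) ∧ ¬ WeaklyNull xs) →
    AttainsMinMod T


section Aux
open NormedSpace

variable {X : Type*} [NormedAddCommGroup X] [NormedSpace ℝ X]

/-- A functional vanishing on a closed subspace but not at a point outside it. -/
lemma exists_dual_vanish (Z : Submodule ℝ X) (hZ : IsClosed (Z : Set X)) {x : X}
    (hx : x ∉ Z) : ∃ f : X →L[ℝ] ℝ, (∀ z ∈ Z, f z = 0) ∧ f x ≠ 0 := by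
  obtain ⟨f, u, hs, hux⟩ := geometric_hahn_banach_closed_point Z.convex hZ hx
  have hvan : ∀ z ∈ Z, f z = 0 := by
    intro z hz
    by_contra h
    have h1 := hs (((|u| + 1) / f z) • z) (Z.smul_mem _ hz)
    rw [map_smul, smul_eq_mul, div_mul_cancel₀ _ h] at h1
    have := le_abs_self u
    linarith
  have h0 : (0:ℝ) < u := by simpa using hs 0 Z.zero_mem
  exact ⟨f, hvan, by intro h; rw [h] at hux; linarith⟩

/-- A closed subspace of a reflexive space is reflexive. -/
lemma submodule_reflexive (hrefl : Function.Surjective ⇑(inclusionInDoubleDual ℝ X))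
    (Z : Submodule ℝ X) (hZ : IsClosed (Z : Set X)) :
    Function.Surjective ⇑(inclusionInDoubleDual ℝ Z) := by
  intro Λ
  let R : (X →L[ℝ] ℝ) →L[ℝ] (Z →L[ℝ] ℝ) :=
    (ContinuousLinearMap.compL ℝ Z X ℝ).flip Z.subtypeL
  obtain ⟨x, hxeq⟩ := hrefl (Λ.comp R)
  have key : ∀ f : X →L[ℝ] ℝ, f x = Λ (f.comp Z.subtypeL) := by
    intro f
    have h2 : (inclusionInDoubleDual ℝ X x) f = (Λ.comp R) f := by rw [hxeq]
    simpa [R, dual_def, ContinuousLinearMap.compL_apply] using h2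
  have hxZ : x ∈ Z := by
    by_contra h
    obtain ⟨f, hvan, hne⟩ := exists_dual_vanish Z hZ h
    have hz : f.comp Z.subtypeL = 0 := by
      ext z; exact hvan z z.2
    have := key f
    rw [hz] at this
    simp at this
    exact hne this
  refine ⟨⟨x, hxZ⟩, ?_⟩
  ext g
  obtain ⟨f, hf, -⟩ := exists_extension_norm_eq Z g
  have h1 : f.comp Z.subtypeL = g := by ext z; exact hf z
  have h2 := key f
  rw [h1] at h2
  change g (⟨x, hxZ⟩ : Z) = Λ g
  rw [← h2]
  exact (hf ⟨x, hxZ⟩).symm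


lemma separable_of_dual_separable {W : Type*} [NormedAddCommGroup W] [NormedSpace ℝ W]
    (h : TopologicalSpace.SeparableSpace (W →L[ℝ] ℝ)) :
    TopologicalSpace.SeparableSpace W := by
  classical
  have : Nonempty (W →L[ℝ] ℝ) := ⟨0⟩
  obtain ⟨F, hF⟩ := TopologicalSpace.exists_dense_seq (W →L[ℝ] ℝ)
  have hchoice : ∀ i : ℕ, ∃ x : W, ‖x‖ ≤ 1 ∧ (F i ≠ 0 → ‖F i‖ / 2 < ‖(F i) x‖) := by
    intro i
    by_cases hi : F i = 0
    · exact ⟨0, by simp, fun h => absurd hi h⟩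
    · have hlt : ‖F i‖ / 2 < ‖F i‖ := by
        have := norm_pos_iff.2 hi
        linarith
      obtain ⟨x, hx1, hx2⟩ := ContinuousLinearMap.exists_lt_apply_of_lt_opNorm (F i) hlt
      exact ⟨x, hx1.le, fun _ => hx2⟩
  choose w hw1 hw2 using hchoice
  set Z : Submodule ℝ W := (Submodule.span ℝ (Set.range w)).topologicalClosure with hZdef
  have hZc : IsClosed (Z : Set W) := Submodule.isClosed_topologicalClosure _
  have hall : ∀ x : W, x ∈ Z := by
    intro x
    by_contra hx
    obtain ⟨f, hvan, hne⟩ := exists_dual_vanish Z hZc hx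
    have hfnorm : ‖f‖ ≠ 0 := fun h => hne (by simp [norm_eq_zero.1 h])
    set G : W →L[ℝ] ℝ := ‖f‖⁻¹ • f with hGdef
    have hGnorm : ‖G‖ = 1 := by
      have : ‖G‖ = ‖(‖f‖⁻¹)‖ * ‖f‖ := norm_smul (‖f‖⁻¹) f
      rw [this, Real.norm_eq_abs, abs_of_nonneg (inv_nonneg.2 (norm_nonneg f)),
        inv_mul_cancel₀ hfnorm]
    have hGvan : ∀ z ∈ Z, G z = 0 := by
      intro z hz; simp [hGdef, hvan z hz]
    obtain ⟨i, hi⟩ := Metric.denseRange_iff.1 hF G (1/3) (by norm_num)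
    have hFiG : ‖G - F i‖ < 1/3 := by
      have hd : dist G (F i) = ‖G - F i‖ := dist_eq_norm G (F i)
      linarith
    have hFi_big : (2:ℝ)/3 < ‖F i‖ := by
      have h3 : ‖G‖ ≤ ‖G - F i‖ + ‖F i‖ := by
        calc ‖G‖ = ‖(G - F i) + F i‖ := by rw [sub_add_cancel]
          _ ≤ ‖G - F i‖ + ‖F i‖ := norm_add_le _ _
      linarith
    have hFiNe : F i ≠ 0 := by
      intro h; rw [h, norm_zero] at hFi_big; linarith
    have h1 := hw2 i hFiNe
    have hwZ : w i ∈ Z := by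
      exact Submodule.le_topologicalClosure _ (Submodule.subset_span (Set.mem_range_self i))
    have h2 : ‖(F i) (w i)‖ ≤ 1/3 := by
      have : (F i) (w i) = (F i) (w i) - G (w i) := by rw [hGvan _ hwZ]; ring
      rw [this]
      calc ‖(F i) (w i) - G (w i)‖ = ‖(F i - G) (w i)‖ := by simp
        _ ≤ ‖F i - G‖ * ‖w i‖ := (F i - G).le_opNorm _
        _ ≤ ‖F i - G‖ * 1 := by
            exact mul_le_mul_of_nonneg_left (hw1 i) (norm_nonneg _)
        _ ≤ 1/3 := by rw [mul_one, norm_sub_rev]; exact hFiG.le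
    linarith
  have hsep : TopologicalSpace.IsSeparable (Z : Set W) := by
    rw [hZdef, Submodule.topologicalClosure_coe]
    exact ((Set.countable_range w).isSeparable.span).closure
  have huniv : (Set.univ : Set W) = (Z : Set W) := by
    ext x; simp [hall x]
  exact TopologicalSpace.isSeparable_univ_iff.1 (huniv ▸ hsep)

set_option maxHeartbeats 1000000 in
lemma exists_weak_limit_core {W : Type*} [NormedAddCommGroup W] [NormedSpace ℝ W]
    [TopologicalSpace.SeparableSpace (W →L[ℝ] ℝ)]
    (z : ℕ → W) (hzb : ∀ n, ‖z n‖ ≤ 1)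
    (hWrefl : Function.Surjective ⇑(inclusionInDoubleDual ℝ W)) :
    ∃ (φ : ℕ → ℕ) (p : W), StrictMono φ ∧
      ∀ h : W →L[ℝ] ℝ, Tendsto (fun n => h (z (φ n))) atTop (𝓝 (h p)) := by
  classical
  haveI : Nonempty (W →L[ℝ] ℝ) := ⟨0⟩
  obtain ⟨g, hg⟩ := TopologicalSpace.exists_dense_seq (W →L[ℝ] ℝ)
  set S : Set (ℕ → ℝ) := Set.univ.pi (fun k : ℕ => Set.Icc (-‖g k‖) (‖g k‖)) with hSdef
  have hSc : IsCompact S := isCompact_univ_pi fun k => isCompact_Icc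
  set u : ℕ → (ℕ → ℝ) := fun n k => g k (z n) with hudef
  have hu : ∀ n, u n ∈ S := by
    intro n k _
    have h2 : ‖g k (z n)‖ ≤ ‖g k‖ := by
      calc ‖g k (z n)‖ ≤ ‖g k‖ * ‖z n‖ := (g k).le_opNorm (z n)
        _ ≤ ‖g k‖ * 1 := mul_le_mul_of_nonneg_left (hzb n) (norm_nonneg _)
        _ = ‖g k‖ := mul_one _
    rw [Real.norm_eq_abs, abs_le] at h2
    exact Set.mem_Icc.2 ⟨h2.1, h2.2⟩
  obtain ⟨L, _, φ, hφ, hconv⟩ := hSc.tendsto_subseq hu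
  have hpt : ∀ k, Tendsto (fun n => g k (z (φ n))) atTop (𝓝 (L k)) := by
    intro k
    exact tendsto_pi_nhds.1 hconv k
  have hcauchy : ∀ h : W →L[ℝ] ℝ, ∃ c : ℝ, Tendsto (fun n => h (z (φ n))) atTop (𝓝 c) := by
    intro h
    have hCS : CauchySeq (fun n => h (z (φ n))) := by
      rw [Metric.cauchySeq_iff]
      intro ε hε
      obtain ⟨k, hk⟩ := Metric.denseRange_iff.1 hg h (ε/3) (by linarith)
      have hgk : CauchySeq (fun n => g k (z (φ n))) := (hpt k).cauchySeq
      obtain ⟨N, hN⟩ := Metric.cauchySeq_iff.1 hgk (ε/3) (by linarith)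
      refine ⟨N, fun m hm n hn => ?_⟩
      have hbnd : ∀ j : ℕ, dist (h (z (φ j))) (g k (z (φ j))) ≤ ε/3 := by
        intro j
        rw [dist_eq_norm]
        have hd : dist h (g k) = ‖h - g k‖ := dist_eq_norm _ _
        calc ‖h (z (φ j)) - g k (z (φ j))‖ = ‖(h - g k) (z (φ j))‖ := by simp
          _ ≤ ‖h - g k‖ * ‖z (φ j)‖ := (h - g k).le_opNorm _
          _ ≤ ‖h - g k‖ * 1 := by
              have h0 : (0:ℝ) ≤ ‖h - g k‖ := norm_nonneg _
              exact mul_le_mul_of_nonneg_left (hzb _) h0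
          _ ≤ ε/3 := by rw [mul_one]; linarith
      have h3 := hN m hm n hn
      have b1 := hbnd m
      have b2 := hbnd n
      have b3 : dist ((g k) (z (φ n))) (h (z (φ n))) ≤ ε/3 := by
        rw [dist_comm]; exact b2
      calc dist (h (z (φ m))) (h (z (φ n)))
          ≤ dist (h (z (φ m))) (g k (z (φ m))) + dist (g k (z (φ m))) (h (z (φ n))) :=
            dist_triangle _ _ _
        _ ≤ dist (h (z (φ m))) (g k (z (φ m))) +
              (dist (g k (z (φ m))) (g k (z (φ n))) + dist (g k (z (φ n))) (h (z (φ n)))) := by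
            have := dist_triangle (g k (z (φ m))) (g k (z (φ n))) (h (z (φ n)))
            linarith
        _ < ε := by linarith
    exact cauchySeq_tendsto_of_complete hCS
  have hchoose : ∀ h : W →L[ℝ] ℝ,
      Tendsto (fun n => h (z (φ n))) atTop (𝓝 ((hcauchy h).choose)) := fun h =>
    (hcauchy h).choose_spec
  set Λ₀ : (W →L[ℝ] ℝ) →ₗ[ℝ] ℝ :=
    { toFun := fun h => (hcauchy h).choose
      map_add' := by
        intro a b
        refine tendsto_nhds_unique (hchoose (a + b)) ?_
        have := (hchoose a).add (hchoose b)
        simpa using this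
      map_smul' := by
        intro c a
        refine tendsto_nhds_unique (hchoose (c • a)) ?_
        have := (hchoose a).const_mul c
        simpa [mul_comm] using this } with hΛ₀def
  have hΛbound : ∀ h : W →L[ℝ] ℝ, ‖Λ₀ h‖ ≤ 1 * ‖h‖ := by
    intro h
    rw [one_mul, Real.norm_eq_abs]
    have habs : Tendsto (fun n => |h (z (φ n))|) atTop (𝓝 |(hcauchy h).choose|) :=
      (hchoose h).abs
    refine le_of_tendsto habs (Eventually.of_forall fun n => ?_)
    calc |h (z (φ n))| = ‖h (z (φ n))‖ := rfl
      _ ≤ ‖h‖ * ‖z (φ n)‖ := h.le_opNorm _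
      _ ≤ ‖h‖ * 1 := mul_le_mul_of_nonneg_left (hzb _) (norm_nonneg _)
      _ = ‖h‖ := mul_one _
  set Λ : (W →L[ℝ] ℝ) →L[ℝ] ℝ := Λ₀.mkContinuous 1 hΛbound with hΛdef
  obtain ⟨p, hp⟩ := hWrefl Λ
  refine ⟨φ, p, hφ, fun h => ?_⟩
  have h1 : (inclusionInDoubleDual ℝ W p) h = Λ h := by rw [hp]
  have h2 : h p = (hcauchy h).choose := h1
  rw [h2]
  exact hchoose h

set_option maxHeartbeats 1000000 in
set_option synthInstance.maxHeartbeats 400000 in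
lemma exists_weak_subseq {X : Type*} [NormedAddCommGroup X] [NormedSpace ℝ X]
    (hrefl : Function.Surjective ⇑(inclusionInDoubleDual ℝ X))
    (x : ℕ → X) (hb : ∀ n, ‖x n‖ ≤ 1) :
    ∃ (φ : ℕ → ℕ) (p : X), StrictMono φ ∧
      ∀ f : X →L[ℝ] ℝ, Tendsto (fun n => f (x (φ n))) atTop (𝓝 (f p)) := by
  classical
  set Z : Submodule ℝ X := (Submodule.span ℝ (Set.range x)).topologicalClosure with hZdef
  have hZc : IsClosed (Z : Set X) := Submodule.isClosed_topologicalClosure _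
  have hsep : TopologicalSpace.IsSeparable (Z : Set X) := by
    rw [hZdef, Submodule.topologicalClosure_coe]
    exact ((Set.countable_range x).isSeparable.span).closure
  haveI hsepZ : TopologicalSpace.SeparableSpace Z := hsep.separableSpace
  have hZrefl := submodule_reflexive hrefl Z hZc
  haveI hsepDD : TopologicalSpace.SeparableSpace ((Z →L[ℝ] ℝ) →L[ℝ] ℝ) := by
    have hc : Continuous ⇑(inclusionInDoubleDual ℝ Z) :=
      (inclusionInDoubleDual ℝ Z).continuous
    exact hZrefl.denseRange.separableSpace hc
  haveI hsepD : TopologicalSpace.SeparableSpace (Z →L[ℝ] ℝ) :=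
    separable_of_dual_separable (W := Z →L[ℝ] ℝ) hsepDD
  have hmem : ∀ n, x n ∈ Z := fun n =>
    Submodule.le_topologicalClosure _ (Submodule.subset_span (Set.mem_range_self n))
  set z : ℕ → Z := fun n => ⟨x n, hmem n⟩ with hzdef
  have hzb : ∀ n, ‖z n‖ ≤ 1 := fun n => hb n
  obtain ⟨φ, p, hφ, hlim⟩ := exists_weak_limit_core z hzb hZrefl
  refine ⟨φ, (p : X), hφ, fun f => ?_⟩
  have := hlim (f.comp Z.subtypeL)
  simpa using this

lemma minMod_le' {X Y : Type*} [NormedAddCommGroup X] [NormedSpace ℝ X]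
    [NormedAddCommGroup Y] [NormedSpace ℝ Y] (T : X →L[ℝ] Y) {x : X} (hx : ‖x‖ = 1) :
    minMod T ≤ ‖T x‖ :=
  csInf_le ⟨0, fun r ⟨y, _, hy⟩ => hy ▸ norm_nonneg _⟩ ⟨x, hx, rfl⟩

lemma norm_le_apply_of_one_le_minMod {X Y : Type*} [NormedAddCommGroup X] [NormedSpace ℝ X]
    [NormedAddCommGroup Y] [NormedSpace ℝ Y] (T : X →L[ℝ] Y) (hT : 1 ≤ minMod T) (v : X) :
    ‖v‖ ≤ ‖T v‖ := by
  by_cases hv : v = 0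
  · simp [hv]
  · have h1 : ‖(‖v‖⁻¹ : ℝ) • v‖ = 1 := norm_smul_inv_norm hv
    have h2 : minMod T ≤ ‖T ((‖v‖⁻¹ : ℝ) • v)‖ := minMod_le' T h1
    rw [map_smul, norm_smul, Real.norm_eq_abs,
      abs_of_nonneg (inv_nonneg.2 (norm_nonneg v))] at h2
    have hvpos : 0 < ‖v‖ := norm_pos_iff.2 hv
    have := le_trans hT h2
    rw [le_inv_mul_iff₀ hvpos] at this
    linarith [this]

open Pointwise in
lemma minMod_smul {X Y : Type*} [NormedAddCommGroup X] [NormedSpace ℝ X]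
    [NormedAddCommGroup Y] [NormedSpace ℝ Y] (T : X →L[ℝ] Y) {c : ℝ} (hc : 0 ≤ c) :
    minMod (c • T) = c * minMod T := by
  have hset : {r : ℝ | ∃ x : X, ‖x‖ = 1 ∧ ‖(c • T) x‖ = r}
      = c • {r : ℝ | ∃ x : X, ‖x‖ = 1 ∧ ‖T x‖ = r} := by
    ext r
    constructor
    · rintro ⟨x, hx, hr⟩
      refine ⟨‖T x‖, ⟨x, hx, rfl⟩, ?_⟩
      show c • ‖T x‖ = r
      rw [smul_eq_mul, ← hr]
      simp [norm_smul, abs_of_nonneg hc]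
    · rintro ⟨s, ⟨x, hx, hs⟩, hr⟩
      refine ⟨x, hx, ?_⟩
      have hcs : ‖(c • T) x‖ = c • s := by
        rw [← hs, smul_eq_mul]
        simp [norm_smul, abs_of_nonneg hc]
      rw [hcs]
      exact hr
  rw [minMod, hset, Real.sInf_smul_of_nonneg hc, smul_eq_mul, minMod]


end Aux

set_option maxHeartbeats 1000000 in
theorem stmt3 {X Y : Type*} [NormedAddCommGroup X] [NormedSpace ℝ X] [CompleteSpace X]
    [NormedAddCommGroup Y] [NormedSpace ℝ Y] [CompleteSpace Y]
    (hrefl : Function.Surjective ⇑(NormedSpace.inclusionInDoubleDual ℝ X))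
    (hm : PairPropM X Y) (ho : PairPropO X Y) :
    WeakMinimizingProperty X Y := by
  rintro T ⟨xs, hxs1, hxs2, hxs3⟩
  classical
  -- extract a functional witnessing non-weak-nullity
  rw [WeaklyNull] at hxs3
  push_neg at hxs3
  obtain ⟨f, hf⟩ := hxs3
  have hfreq : ∃ ε > (0:ℝ), ∃ᶠ n in atTop, ε ≤ ‖f (xs n)‖ := by
    by_contra hcon
    push_neg at hcon
    apply hf
    rw [tendsto_zero_iff_norm_tendsto_zero]
    rw [Metric.tendsto_atTop]
    intro ε hε
    have h1 := hcon (ε/2) (by linarith)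
    obtain ⟨N, hN⟩ := Filter.eventually_atTop.1 h1
    refine ⟨N, fun n hn => ?_⟩
    have := hN n hn
    rw [Real.dist_eq]
    have h0 : (0:ℝ) ≤ ‖f (xs n)‖ := norm_nonneg _
    rw [abs_of_nonneg (by linarith)]
    linarith
  obtain ⟨ε, hε, hfr⟩ := hfreq
  obtain ⟨ψ, hψ, hψ2⟩ := Filter.extraction_of_frequently_atTop hfr
  obtain ⟨φ, p, hφ, hwk⟩ := exists_weak_subseq hrefl (xs ∘ ψ)
    (fun n => le_of_eq (hxs1 (ψ n)))
  set θ : ℕ → ℕ := ψ ∘ φ with hθdef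
  have hθ : StrictMono θ := hψ.comp hφ
  have hwk' : ∀ g : X →L[ℝ] ℝ, Tendsto (fun n => g (xs (θ n))) atTop (𝓝 (g p)) :=
    fun g => hwk g
  -- p ≠ 0
  have hpne : p ≠ 0 := by
    intro hp0
    have h1 : Tendsto (fun n => ‖f (xs (θ n))‖) atTop (𝓝 ‖f p‖) := (hwk' f).norm
    have h2 : ε ≤ ‖f p‖ :=
      ge_of_tendsto h1 (Filter.Eventually.of_forall fun n => hψ2 (φ n))
    rw [hp0] at h2
    simp at h2
    linarith
  -- weakly null difference sequence
  set zs : ℕ → X := fun n => xs (θ n) - p with hzsdef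
  have hzs : WeaklyNull zs := by
    intro g
    have h1 := (hwk' g).sub_const (g p)
    simp only [sub_self] at h1
    have heq : (fun n => g (zs n)) = fun n => g (xs (θ n)) - g p := by
      funext n; simp [hzsdef, map_sub]
    rw [heq]
    exact h1
  set m : ℝ := minMod T with hmdef
  have htm : Tendsto (fun n => ‖T (xs (θ n))‖) atTop (𝓝 m) :=
    hxs2.comp hθ.tendsto_atTop
  have hm0 : 0 ≤ m := ge_of_tendsto htm (Filter.Eventually.of_forall fun n => norm_nonneg _)
  have hppos : 0 < ‖p‖ := norm_pos_iff.2 hpne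
  by_cases hmz : m = 0
  · -- minimum modulus zero: weak limit is in the kernel
    have hTp : T p = 0 := by
      refine NormedSpace.eq_zero_of_forall_dual_eq_zero ℝ fun g => ?_
      have h1 : Tendsto (fun n => g (T (xs (θ n)))) atTop (𝓝 (g (T p))) := by
        have := hwk' (g.comp T)
        simpa using this
      have h2 : Tendsto (fun n => g (T (xs (θ n)))) atTop (𝓝 0) := by
        refine squeeze_zero_norm (fun n => g.le_opNorm _) ?_
        have h3 : Tendsto (fun n => ‖g‖ * ‖T (xs (θ n))‖) atTop (𝓝 (‖g‖ * m)) :=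
          htm.const_mul ‖g‖
        rw [hmz, mul_zero] at h3
        exact h3
      exact tendsto_nhds_unique h1 h2
    refine ⟨(‖p‖⁻¹ : ℝ) • p, norm_smul_inv_norm hpne, ?_⟩
    rw [map_smul, hTp, smul_zero, norm_zero, ← hmdef, hmz]
  · -- positive minimum modulus
    have hmpos : 0 < m := lt_of_le_of_ne hm0 (Ne.symm hmz)
    set T' : X →L[ℝ] Y := m⁻¹ • T with hT'def
    have hT'min : minMod T' = 1 := by
      rw [hT'def, minMod_smul T (inv_nonneg.2 hm0), ← hmdef, inv_mul_cancel₀ hmz]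
    have h1le : (1:ℝ) ≤ minMod T' := hT'min.ge
    have hlow : ∀ v : X, ‖v‖ ≤ ‖T' v‖ := norm_le_apply_of_one_le_minMod T' h1le
    have hT'p_ne : T' p ≠ 0 := by
      intro h
      have := hlow p
      rw [h, norm_zero] at this
      exact absurd (le_antisymm this (norm_nonneg p)) (ne_of_gt hppos)
    have htm' : Tendsto (fun n => ‖T' (xs (θ n))‖) atTop (𝓝 1) := by
      have heq : (fun n => ‖T' (xs (θ n))‖) = fun n => m⁻¹ * ‖T (xs (θ n))‖ := by
        funext n
        have hv : T' (xs (θ n)) = m⁻¹ • (T (xs (θ n))) := rfl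
        rw [hv, norm_smul, Real.norm_eq_abs, abs_of_nonneg (inv_nonneg.2 hm0)]
      rw [heq]
      have h3 := htm.const_mul m⁻¹
      rw [inv_mul_cancel₀ hmz] at h3
      exact h3
    have hlimT' : limsup (fun n => ‖T' p + T' (zs n)‖) atTop = 1 := by
      have heq : (fun n => ‖T' p + T' (zs n)‖) = fun n => ‖T' (xs (θ n))‖ := by
        funext n
        congr 1
        rw [hzsdef]
        simp only [map_sub]
        abel
      rw [heq]
      exact htm'.limsup_eq
    have hr : limsup (fun n => ‖zs n‖) atTop < 1 := by
      have := ho T' h1le (T' p) hT'p_ne zs hzs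
      rwa [hlimT'] at this
    have hbz : ∀ n, ‖zs n‖ ≤ 1 + ‖p‖ := by
      intro n
      calc ‖xs (θ n) - p‖ ≤ ‖xs (θ n)‖ + ‖p‖ := norm_sub_le _ _
        _ = 1 + ‖p‖ := by rw [hxs1]
    have key : ‖T' p‖ ≤ ‖p‖ := by
      by_contra hlt
      push_neg at hlt
      set α : ℝ := ‖T' p‖ / ‖p‖ with hαdef
      have hα1 : 1 < α := (one_lt_div hppos).2 hlt
      have hnorm_eq : ‖α • p‖ = ‖T' p‖ := by
        rw [norm_smul, Real.norm_eq_abs, abs_of_pos (by linarith : (0:ℝ) < α), hαdef,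
          div_mul_cancel₀ _ (ne_of_gt hppos)]
      have hmineq := hm T' h1le (α • p) (T' p) hnorm_eq.le zs hzs
      rw [hlimT'] at hmineq
      set r : ℝ := limsup (fun n => ‖zs n‖) atTop with hrdef
      set ρ : ℝ := (r + 1) / 2 with hρdef
      have hr0 : 0 ≤ r := by
        refine le_limsup_of_frequently_le ?_ (Filter.isBoundedUnder_of ⟨1 + ‖p‖, hbz⟩)
        exact Filter.Eventually.frequently (Filter.Eventually.of_forall fun n => norm_nonneg _)
      have hρlt1 : ρ < 1 := by rw [hρdef]; linarith
      have hrρ : r < ρ := by rw [hρdef]; linarith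
      have hev : ∀ᶠ n in atTop, ‖zs n‖ < ρ :=
        eventually_lt_of_limsup_lt hrρ (Filter.isBoundedUnder_of ⟨1 + ‖p‖, hbz⟩)
      have hpw : ∀ n, α ≤ ‖α • p + zs n‖ + (α - 1) * ‖zs n‖ := by
        intro n
        have hid : α • xs (θ n) = (α • p + zs n) + (α - 1) • zs n := by
          rw [hzsdef]
          module
        have h1 : ‖α • xs (θ n)‖ = α := by
          rw [norm_smul, Real.norm_eq_abs, abs_of_pos (by linarith : (0:ℝ) < α), hxs1, mul_one]
        calc α = ‖α • xs (θ n)‖ := h1.symm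
          _ = ‖(α • p + zs n) + (α - 1) • zs n‖ := by rw [hid]
          _ ≤ ‖α • p + zs n‖ + ‖(α - 1) • zs n‖ := norm_add_le _ _
          _ = ‖α • p + zs n‖ + (α - 1) * ‖zs n‖ := by
              rw [norm_smul, Real.norm_eq_abs, abs_of_pos (by linarith : (0:ℝ) < α - 1)]
      have hev2 : ∀ᶠ n in atTop, α - (α - 1) * ρ ≤ ‖α • p + zs n‖ := by
        filter_upwards [hev] with n hn
        have := hpw n
        nlinarith [norm_nonneg (zs n)]
      have hbdd2 : Filter.IsBoundedUnder (· ≤ ·) atTop (fun n => ‖α • p + zs n‖) := by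
        refine Filter.isBoundedUnder_of ⟨‖α • p‖ + (1 + ‖p‖), fun n => ?_⟩
        calc ‖α • p + zs n‖ ≤ ‖α • p‖ + ‖zs n‖ := norm_add_le _ _
          _ ≤ ‖α • p‖ + (1 + ‖p‖) := by linarith [hbz n]
      have hge : α - (α - 1) * ρ ≤ limsup (fun n => ‖α • p + zs n‖) atTop :=
        le_limsup_of_frequently_le hev2.frequently hbdd2
      have hfin : α - (α - 1) * ρ ≤ 1 := le_trans hge hmineq
      nlinarith
    have heq : ‖T' p‖ = ‖p‖ := le_antisymm key (hlow p)
    have hTpnorm : ‖T p‖ = m * ‖p‖ := by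
      have h1 : ‖T' p‖ = m⁻¹ * ‖T p‖ := by
        have hv : T' p = m⁻¹ • (T p) := rfl
        rw [hv, norm_smul, Real.norm_eq_abs, abs_of_nonneg (inv_nonneg.2 hm0)]
      rw [h1] at heq
      field_simp at heq
      linarith [heq]
    refine ⟨(‖p‖⁻¹ : ℝ) • p, norm_smul_inv_norm hpne, ?_⟩
    rw [map_smul, norm_smul, Real.norm_eq_abs, abs_of_pos (inv_pos.2 hppos), hTpnorm,
      ← hmdef]
    field_simp
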